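/- For every complex number q with 0 < |q| < 1, (−q;q)_∞ + ∑_{k=1}^{∞} (−1)^k ∑_{m=0}^{∞} q^{C(3k+m,2) − 3·C(k,2)} · [m+k−1 choose k−1]_{q^{−1}} · (−q^{3k+m+1}; q)_∞ / (q²;q²)_k = (−q;q)_∞ · ∑_{k=0}^{∞} (−1)^k q^{3k²} / ((q²;q²)_k · (−q;q)_{2k}), where C(a,2) = a(a−1)/2 denotes a binomial coefficient. -/

import Mathlib

open Finset

/-- Finite q-Pochhammer symbol: (a;q)_n = ∏_{j=0}^{n-1} (1 - a q^j). -/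
noncomputable def qPoch (a q : ℂ) (n : ℕ) : ℂ := ∏ j ∈ Finset.range n, (1 - a * q ^ j)

/-- Infinite q-Pochhammer symbol: (a;q)_∞ = ∏_{j=0}^{∞} (1 - a q^j). -/
noncomputable def qPochInf (a q : ℂ) : ℂ := ∏' j : ℕ, (1 - a * q ^ j)

/-- Gaussian binomial coefficient [N choose j]_q, as a rational function of q;
for 0 < |q| < 1 (and for |q⁻¹| > 1) this agrees with the q-binomial polynomial
evaluated at q. -/
noncomputable def qBinom (q : ℂ) (N j : ℕ) : ℂ :=
  qPoch q q N / (qPoch q q j * qPoch q q (N - j))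

open Filter Complex

namespace NoRaftAux

lemma choose2_succ (m : ℕ) : (m+1).choose 2 = m.choose 2 + m := by
  have := Nat.choose_succ_succ m 1
  simp [Nat.choose_one_right] at this
  omega

lemma norm_one_add_ge (z : ℂ) : 1 - ‖z‖ ≤ ‖1 + z‖ := by
  have h : ‖(1:ℂ)‖ ≤ ‖1 + z‖ + ‖z‖ := by
    calc ‖(1:ℂ)‖ = ‖(1 + z) + (-z)‖ := by ring_nf
    _ ≤ ‖1 + z‖ + ‖-z‖ := norm_add_le _ _
    _ = ‖1 + z‖ + ‖z‖ := by rw [norm_neg]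
  simp only [norm_one] at h
  linarith

lemma one_add_ne (z : ℂ) (h : ‖z‖ < 1) : 1 + z ≠ 0 := by
  intro h0
  have := norm_one_add_ge z
  rw [h0, norm_zero] at this
  linarith

/-- Weierstrass product inequality. -/
lemma prod_one_sub_ge (f : ℕ → ℝ) (h0 : ∀ j, 0 ≤ f j) (h1 : ∀ j, f j ≤ 1) (m : ℕ) :
    1 - ∑ j ∈ range m, f j ≤ ∏ j ∈ range m, (1 - f j) := by
  induction m with
  | zero => simp
  | succ m ih =>
    rw [Finset.prod_range_succ, Finset.sum_range_succ]
    have hfm : 0 ≤ 1 - f m := by linarith [h1 m]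
    have hS : 0 ≤ ∑ j ∈ range m, f j := Finset.sum_nonneg fun j _ => h0 j
    nlinarith [ih, h0 m]

variable {q : ℂ}

lemma pow_norm_le (hq : ‖q‖ < 1) {i j : ℕ} (hij : i ≤ j) : ‖q‖^j ≤ ‖q‖^i :=
  pow_le_pow_of_le_one (norm_nonneg q) (le_of_lt hq) hij

/-- Uniform positive lower bound for products ∏ (1 + f j) with ‖f j‖ ≤ ‖q‖^(j+1). -/
lemma exists_lower (hq : ‖q‖ < 1) : ∃ c : ℝ, 0 < c ∧ ∀ (m : ℕ) (f : ℕ → ℂ),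
    (∀ j, ‖f j‖ ≤ ‖q‖^(j+1)) → c ≤ ‖∏ j ∈ range m, (1 + f j)‖ := by
  set a := ‖q‖ with ha
  have ha0 : 0 ≤ a := norm_nonneg q
  have ha1 : a < 1 := hq
  have hple : ∀ i : ℕ, 1 ≤ i → a ^ i ≤ a := by
    intro i hi
    calc a ^ i ≤ a ^ 1 := pow_le_pow_of_le_one ha0 ha1.le hi
    _ = a := pow_one a
  have hpos : ∀ j : ℕ, 0 < 1 - a^(j+1) := by
    intro j
    have : a^(j+1) < 1 := lt_of_le_of_lt (hple (j+1) (by omega)) ha1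
    linarith
  obtain ⟨T, hT⟩ : ∃ T : ℕ, a^(T+1) ≤ (1-a)/2 := by
    have := tendsto_pow_atTop_nhds_zero_of_lt_one ha0 ha1
    have h2 : (0:ℝ) < (1-a)/2 := by linarith
    obtain ⟨T, hT⟩ := (this.eventually (ge_mem_nhds h2)).exists
    exact ⟨T, le_trans (pow_le_pow_of_le_one ha0 ha1.le (Nat.le_succ T)) hT⟩
  have hheadpos : (0:ℝ) < ∏ j ∈ range T, (1 - a^(j+1)) :=
    Finset.prod_pos fun j _ => hpos j
  refine ⟨(∏ j ∈ range T, (1 - a^(j+1))) * (1/2), by positivity, ?_⟩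
  intro m f hf
  have key : (∏ j ∈ range T, (1 - a^(j+1))) * (1/2) ≤ ∏ j ∈ range m, (1 - a^(j+1)) := by
    rcases le_or_gt m T with h | h
    · calc (∏ j ∈ range T, (1 - a^(j+1))) * (1/2)
          ≤ (∏ j ∈ range T, (1 - a^(j+1))) * 1 := by nlinarith
      _ = ∏ j ∈ range T, (1 - a^(j+1)) := by ring
      _ = (∏ j ∈ range m, (1 - a^(j+1))) * ∏ j ∈ Ico m T, (1 - a^(j+1)) := by
            rw [Finset.prod_range_mul_prod_Ico _ h]
      _ ≤ (∏ j ∈ range m, (1 - a^(j+1))) * 1 := by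
            have h1 : ∏ j ∈ Ico m T, (1 - a^(j+1)) ≤ 1 :=
              Finset.prod_le_one (fun j _ => (hpos j).le)
                (fun j _ => by linarith [pow_nonneg ha0 (j+1)])
            have h2 : (0:ℝ) ≤ ∏ j ∈ range m, (1 - a^(j+1)) :=
              Finset.prod_nonneg fun j _ => (hpos j).le
            nlinarith
      _ = ∏ j ∈ range m, (1 - a^(j+1)) := by ring
    · have hsplit : ∏ j ∈ range m, (1 - a^(j+1))
          = (∏ j ∈ range T, (1 - a^(j+1))) * ∏ j ∈ Ico T m, (1 - a^(j+1)) :=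
        (Finset.prod_range_mul_prod_Ico _ h.le).symm
      rw [hsplit]
      have hsum : ∑ i ∈ range (m-T), a^(T+i+1) ≤ 1/2 := by
        rcases eq_or_lt_of_le ha0 with h0 | h0
        · have : ∀ i ∈ range (m-T), a^(T+i+1) = 0 := by
            intro i _; rw [← h0]; exact zero_pow (by omega)
          rw [Finset.sum_congr rfl this]
          simp
        · have hrw : ∑ i ∈ range (m-T), a^(T+i+1) = a^(T+1) * ∑ i ∈ range (m-T), a^i := by
            rw [Finset.mul_sum]
            exact Finset.sum_congr rfl fun i _ => by rw [← pow_add]; ring_nf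
          rw [hrw]
          have hgeom : ∑ i ∈ range (m-T), a^i ≤ (1-a)⁻¹ := by
            have hs := Summable.sum_le_tsum (range (m-T)) (fun i _ => pow_nonneg ha0 i)
              (summable_geometric_of_lt_one ha0 ha1)
            rwa [tsum_geometric_of_lt_one ha0 ha1] at hs
          have hinv : (0:ℝ) ≤ (1-a)⁻¹ := inv_nonneg.mpr (by linarith)
          calc a^(T+1) * ∑ i ∈ range (m-T), a^i ≤ a^(T+1) * (1-a)⁻¹ :=
                mul_le_mul_of_nonneg_left hgeom (pow_nonneg ha0 _)
          _ ≤ ((1-a)/2) * (1-a)⁻¹ := mul_le_mul_of_nonneg_right hT hinv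
          _ = 1/2 := by
                have hne : (1-a) ≠ 0 := by linarith
                field_simp
      have htail : (1:ℝ)/2 ≤ ∏ j ∈ Ico T m, (1 - a^(j+1)) := by
        have hre : ∏ j ∈ Ico T m, (1 - a^(j+1)) = ∏ i ∈ range (m-T), (1 - a^(T+i+1)) := by
          rw [Finset.prod_Ico_eq_prod_range]
        rw [hre]
        calc (1:ℝ)/2 = 1 - 1/2 := by ring
        _ ≤ 1 - ∑ i ∈ range (m-T), a^(T+i+1) := by linarith [hsum]
        _ ≤ ∏ i ∈ range (m-T), (1 - a^(T+i+1)) :=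
            prod_one_sub_ge _ (fun i => pow_nonneg ha0 _)
              (fun i => le_trans (hple _ (by omega)) ha1.le) (m-T)
      nlinarith
  calc (∏ j ∈ range T, (1 - a^(j+1))) * (1/2) ≤ ∏ j ∈ range m, (1 - a^(j+1)) := key
  _ ≤ ∏ j ∈ range m, ‖1 + f j‖ := by
      apply Finset.prod_le_prod (fun j _ => (hpos j).le)
      intro j _
      calc 1 - a^(j+1) ≤ 1 - ‖f j‖ := by linarith [hf j]
      _ ≤ ‖1 + f j‖ := norm_one_add_ge _
  _ = ‖∏ j ∈ range m, (1 + f j)‖ := by rw [norm_prod]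

/-- Uniform upper bound for finite subproducts. -/
lemma prod_le_upper (hq : ‖q‖ < 1) (F : Finset ℕ) (f : ℕ → ℂ)
    (hf : ∀ j, ‖f j‖ ≤ ‖q‖^(j+1)) :
    ‖∏ j ∈ F, (1 + f j)‖ ≤ Real.exp (‖q‖/(1-‖q‖)) := by
  have ha0 : 0 ≤ ‖q‖ := norm_nonneg q
  rw [norm_prod]
  calc ∏ j ∈ F, ‖1 + f j‖ ≤ ∏ j ∈ F, Real.exp (‖q‖^(j+1)) := by
        apply Finset.prod_le_prod (fun j _ => norm_nonneg _)
        intro j _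
        calc ‖1 + f j‖ ≤ ‖(1:ℂ)‖ + ‖f j‖ := norm_add_le _ _
        _ ≤ 1 + ‖q‖^(j+1) := by rw [norm_one]; linarith [hf j]
        _ ≤ Real.exp (‖q‖^(j+1)) := by linarith [Real.add_one_le_exp (‖q‖^(j+1))]
  _ = Real.exp (∑ j ∈ F, ‖q‖^(j+1)) := (Real.exp_sum F _).symm
  _ ≤ Real.exp (‖q‖/(1-‖q‖)) := by
        apply Real.exp_le_exp.mpr
        have hsum : Summable (fun j : ℕ => ‖q‖^(j+1)) := by
          simp only [pow_succ]
          exact (summable_geometric_of_lt_one ha0 hq).mul_right _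
        have h1 : ∑ j ∈ F, ‖q‖^(j+1) ≤ ∑' j : ℕ, ‖q‖^(j+1) :=
          Summable.sum_le_tsum F (fun i _ => pow_nonneg ha0 _) hsum
        have h2 : ∑' j : ℕ, ‖q‖^(j+1) = ‖q‖/(1-‖q‖) := by
          simp only [pow_succ]
          rw [tsum_mul_right, tsum_geometric_of_lt_one ha0 hq]
          rw [div_eq_mul_inv, mul_comm]
        linarith [h1, h2.le]

end NoRaftAux

namespace NoRaftAux

noncomputable def Qp (q : ℂ) (n : ℕ) : ℂ := ∏ j ∈ range n, (1 - q ^ (j+1))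
noncomputable def Bn (q : ℂ) (n m : ℕ) : ℂ := Qp q (n+m) / (Qp q n * Qp q m)
noncomputable def W (q : ℂ) (r : ℕ) : ℂ := ∏' j : ℕ, (1 + q ^ (r + j))
noncomputable def tG (q : ℂ) (n s m : ℕ) : ℂ :=
  q ^ (s*m + m.choose 2) * Bn q n m * W q (s+n+m+1)
noncomputable def Gp (q : ℂ) (n s : ℕ) : ℂ := ∑' m : ℕ, tG q n s m

variable {q : ℂ}

lemma norm_q_pow_le (hq : ‖q‖ < 1) {i j : ℕ} (hij : i ≤ j) : ‖q ^ j‖ ≤ ‖q‖ ^ i := by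
  rw [norm_pow]; exact pow_norm_le hq hij

lemma norm_q_pow_lt_one (hq : ‖q‖ < 1) {j : ℕ} (hj : 1 ≤ j) : ‖q ^ j‖ < 1 :=
  lt_of_le_of_lt (by simpa using norm_q_pow_le hq hj) hq

lemma Qp_succ (n : ℕ) : Qp q (n+1) = Qp q n * (1 - q^(n+1)) := Finset.prod_range_succ _ _

lemma Qp_zero : Qp q 0 = 1 := by simp [Qp]

lemma one_sub_pow_ne (hq : ‖q‖ < 1) {j : ℕ} (hj : 1 ≤ j) : (1 : ℂ) - q ^ j ≠ 0 := by
  have := one_add_ne (-(q^j)) (by rw [norm_neg]; exact norm_q_pow_lt_one hq hj)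
  simpa [sub_eq_add_neg] using this

lemma one_add_pow_ne (hq : ‖q‖ < 1) {j : ℕ} (hj : 1 ≤ j) : (1 : ℂ) + q ^ j ≠ 0 :=
  one_add_ne _ (norm_q_pow_lt_one hq hj)

lemma Qp_ne_zero (hq : ‖q‖ < 1) (n : ℕ) : Qp q n ≠ 0 := by
  rw [Qp]
  exact Finset.prod_ne_zero_iff.mpr fun j _ => one_sub_pow_ne hq (by omega)

lemma Bn_zero_left (hq : ‖q‖ < 1) (m : ℕ) : Bn q 0 m = 1 := by
  rw [Bn, Qp_zero, zero_add, one_mul, div_self (Qp_ne_zero hq m)]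

lemma Bn_zero_right (hq : ‖q‖ < 1) (n : ℕ) : Bn q n 0 = 1 := by
  rw [Bn, Qp_zero, add_zero, mul_one, div_self (Qp_ne_zero hq n)]

/-- q-Pascal identity. -/
lemma Bn_pascal (hq : ‖q‖ < 1) (n m : ℕ) :
    Bn q (n+1) (m+1) = q^(m+1) * Bn q n (m+1) + Bn q (n+1) m := by
  have h1 : Qp q (n+1+(m+1)) = Qp q (n+m+1) * (1 - q^(n+m+2)) := by
    rw [show n+1+(m+1) = (n+m+1)+1 by ring, Qp_succ]
  have h2 : Qp q (n+1) = Qp q n * (1 - q^(n+1)) := Qp_succ n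
  have h3 : Qp q (m+1) = Qp q m * (1 - q^(m+1)) := Qp_succ m
  have h4 : Qp q (n+(m+1)) = Qp q (n+m+1) := by norm_num [show n+(m+1) = n+m+1 by ring]
  have h5 : Qp q (n+1+m) = Qp q (n+m+1) := by norm_num [show n+1+m = n+m+1 by ring]
  rw [Bn, Bn, Bn, h1, h2, h3, h4, h5]
  have e1 := Qp_ne_zero (q := q) hq n
  have e2 := Qp_ne_zero (q := q) hq m
  have e3 := Qp_ne_zero (q := q) hq (n+m+1)
  have e4 := one_sub_pow_ne hq (show 1 ≤ n+1 by omega)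
  have e5 := one_sub_pow_ne hq (show 1 ≤ m+1 by omega)
  field_simp
  ring

lemma multW (hq : ‖q‖ < 1) (r : ℕ) (hr : 1 ≤ r) :
    Multipliable (fun j : ℕ => 1 + q ^ (r + j)) := by
  apply Complex.multipliable_of_summable_log
  · apply Summable.of_norm_bounded_eventually (g := fun n => 3/2 * ‖q‖^n)
      (((summable_geometric_of_lt_one (norm_nonneg q) hq)).mul_left _)
    rw [Nat.cofinite_eq_atTop]
    have htend := tendsto_pow_atTop_nhds_zero_of_lt_one (norm_nonneg q) hq
    filter_upwards [htend.eventually (ge_mem_nhds (by norm_num : (0:ℝ) < 1/2))]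
      with n hn
    have hle : ‖q ^ (r+n)‖ ≤ ‖q‖^n := norm_q_pow_le hq (by omega)
    have h12 : ‖q ^ (r+n)‖ ≤ 1/2 := le_trans hle hn
    calc ‖Complex.log (1 + q^(r+n))‖ ≤ 3/2 * ‖q^(r+n)‖ :=
          Complex.norm_log_one_add_half_le_self h12
    _ ≤ 3/2 * ‖q‖^n := by linarith
lemma W_succ (hq : ‖q‖ < 1) (r : ℕ) (hr : 1 ≤ r) :
    W q r = (1 + q^r) * W q (r+1) := by
  have h1 : Multipliable (fun n : ℕ => 1 + q ^ (r + (n+1))) :=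
    (multW hq (r+1) (by omega)).congr
      (fun n => by rw [show (r+1)+n = r+(n+1) by ring])
  have h2 : ∏' j : ℕ, (1 + q ^ (r + j))
      = (1 + q ^ (r + 0)) * ∏' b : ℕ, (1 + q ^ (r + (b+1))) :=
    tprod_eq_zero_mul' (f := fun j : ℕ => 1 + q ^ (r + j)) h1
  have e1 : ∏' b : ℕ, (1 + q ^ (r + (b+1))) = W q (r+1) :=
    tprod_congr fun b => by rw [show r+(b+1) = (r+1)+b by ring]
  rw [W, h2, e1, add_zero]

lemma W_norm_le (hq : ‖q‖ < 1) (r : ℕ) (hr : 1 ≤ r) :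
    ‖W q r‖ ≤ Real.exp (‖q‖/(1-‖q‖)) := by
  have hm := (multW hq r hr).hasProd
  refine le_of_tendsto hm.norm (Filter.Eventually.of_forall fun F => ?_)
  have := prod_le_upper hq F (fun j => q ^ (r+j))
    (fun j => norm_q_pow_le hq (show j+1 ≤ r+j by omega))
  rw [norm_prod] at this
  exact this

lemma W_factor (hq : ‖q‖ < 1) (r : ℕ) :
    W q 1 = (∏ j ∈ range r, (1 + q^(j+1))) * W q (r+1) := by
  induction r with
  | zero => simp
  | succ r ih =>
    rw [ih, Finset.prod_range_succ, W_succ hq (r+1) (by omega)]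
    ring

lemma exists_master (hq : ‖q‖ < 1) : ∃ C : ℝ, 0 < C ∧
    (∀ r, 1 ≤ r → ‖W q r‖ ≤ C) ∧
    (∀ n s m : ℕ, 1 ≤ s → ‖tG q n s m‖ ≤ C * ‖q‖^m) ∧
    (∀ n s : ℕ, 1 ≤ s → ‖Gp q n s‖ ≤ C / (1-‖q‖)) := by
  obtain ⟨c, hc, hlow⟩ := exists_lower hq
  set U := Real.exp (‖q‖/(1-‖q‖)) with hU
  have hU0 : 0 < U := Real.exp_pos _
  have hQp_up : ∀ n : ℕ, ‖Qp q n‖ ≤ U := by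
    intro n
    have := prod_le_upper hq (range n) (fun j => -(q^(j+1)))
      (fun j => by rw [norm_neg]; exact norm_q_pow_le hq le_rfl)
    simpa [Qp, sub_eq_add_neg, hU] using this
  have hQp_low : ∀ n : ℕ, c ≤ ‖Qp q n‖ := by
    intro n
    have := hlow n (fun j => -(q^(j+1)))
      (fun j => by rw [norm_neg]; exact norm_q_pow_le hq le_rfl)
    simpa [Qp, sub_eq_add_neg] using this
  have hBn : ∀ n m : ℕ, ‖Bn q n m‖ ≤ U/(c*c) := by
    intro n m
    rw [Bn, norm_div, norm_mul]
    apply div_le_div₀ hU0.le (hQp_up _) (by positivity)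
    exact mul_le_mul (hQp_low n) (hQp_low m) hc.le ((hc.le).trans (hQp_low n))
  set C₀ : ℝ := (U/(c*c) + U) with hC₀
  have hC₀pos : 0 < C₀ := by positivity
  have hWle : ∀ r, 1 ≤ r → ‖W q r‖ ≤ C₀ := by
    intro r hr
    have := W_norm_le hq r hr
    have h2 : (0:ℝ) ≤ U/(c*c) := by positivity
    rw [hC₀]; linarith
  have hBnle : ∀ n m, ‖Bn q n m‖ ≤ C₀ := by
    intro n m; have := hBn n m; rw [hC₀]; linarith
  have htGle : ∀ n s m : ℕ, 1 ≤ s → ‖tG q n s m‖ ≤ (C₀*C₀) * ‖q‖^m := by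
    intro n s m hs
    rw [tG, norm_mul, norm_mul]
    have h1 : ‖q ^ (s*m + m.choose 2)‖ ≤ ‖q‖^m :=
      norm_q_pow_le hq (le_trans (Nat.le_mul_of_pos_left m hs) (Nat.le_add_right _ _))
    have h2 := hBnle n m
    have h3 := hWle (s+n+m+1) (by omega)
    have h4 : (0:ℝ) ≤ ‖q‖^m := pow_nonneg (norm_nonneg q) m
    calc ‖q ^ (s*m + m.choose 2)‖ * ‖Bn q n m‖ * ‖W q (s+n+m+1)‖
        ≤ ‖q‖^m * C₀ * C₀ := by
          apply mul_le_mul _ h3 (norm_nonneg _) (by positivity)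
          exact mul_le_mul h1 h2 (norm_nonneg _) h4
    _ = (C₀*C₀) * ‖q‖^m := by ring
  refine ⟨C₀*C₀ + C₀, by positivity, fun r hr => ?_, fun n s m hs => ?_, ?_⟩
  · have := hWle r hr; nlinarith [hC₀pos]
  · have := htGle n s m hs
    have h4 : (0:ℝ) ≤ ‖q‖^m := pow_nonneg (norm_nonneg q) m
    nlinarith [hC₀pos]
  · intro n s hs
    have hgeo : HasSum (fun m : ℕ => (C₀*C₀) * ‖q‖^m) ((C₀*C₀) * (1-‖q‖)⁻¹) :=
      (hasSum_geometric_of_lt_one (norm_nonneg q) hq).mul_left _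
    have hb := tsum_of_norm_bounded hgeo (fun m => htGle n s m hs)
    rw [Gp]
    have hinv : (0:ℝ) ≤ (1-‖q‖)⁻¹ := inv_nonneg.mpr (by linarith)
    calc ‖∑' m, tG q n s m‖ ≤ (C₀*C₀) * (1-‖q‖)⁻¹ := hb
    _ ≤ (C₀*C₀ + C₀) * (1-‖q‖)⁻¹ :=
        mul_le_mul_of_nonneg_right (by nlinarith [hC₀pos]) hinv
    _ = (C₀*C₀ + C₀) / (1-‖q‖) := by rw [div_eq_mul_inv]

lemma summable_tG (hq : ‖q‖ < 1) (n s : ℕ) (hs : 1 ≤ s) : Summable (tG q n s) := by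
  obtain ⟨C, hC, _, htG, _⟩ := exists_master hq
  exact Summable.of_norm_bounded
    ((summable_geometric_of_lt_one (norm_nonneg q) hq).mul_left C)
    (fun m => htG n s m hs)

lemma exp_tel (s m : ℕ) : s*(m+1) + (m+1).choose 2 = (s*m + m.choose 2) + (s+m) := by
  rw [choose2_succ]; ring

lemma Gp_zero_eq (hq : ‖q‖ < 1) (s : ℕ) (hs : 1 ≤ s) : Gp q 0 s = W q s := by
  obtain ⟨C, hC, hW, htG, _⟩ := exists_master hq
  set t : ℕ → ℂ := fun m => q ^ (s*m + m.choose 2) * W q (s+m) with ht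
  have hterm : ∀ m, tG q 0 s m = t m - t (m+1) := by
    intro m
    have hWs : W q (s+m) = (1 + q^(s+m)) * W q (s+m+1) := W_succ hq (s+m) (by omega)
    have hidx : s+0+m+1 = s+m+1 := by ring
    rw [tG, Bn_zero_left hq, ht]
    simp only [hidx]
    rw [hWs, exp_tel s m, pow_add]
    ring
  have hsum : Summable (tG q 0 s) := summable_tG hq 0 s hs
  have h1 : Filter.Tendsto (fun M => ∑ m ∈ range M, tG q 0 s m) atTop (nhds (Gp q 0 s)) :=
    hsum.hasSum.tendsto_sum_nat
  have h2 : ∀ M, ∑ m ∈ range M, tG q 0 s m = t 0 - t M := by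
    intro M
    rw [Finset.sum_congr rfl fun m _ => hterm m]
    exact Finset.sum_range_sub' t M
  have ht0 : t 0 = W q s := by simp [ht]
  have htend : Filter.Tendsto t atTop (nhds 0) := by
    apply squeeze_zero_norm (a := fun M => C * ‖q‖^M)
    · intro M
      rw [ht, norm_mul]
      have h1' : ‖q ^ (s*M + M.choose 2)‖ ≤ ‖q‖^M :=
        norm_q_pow_le hq (le_trans (Nat.le_mul_of_pos_left M hs) (Nat.le_add_right _ _))
      have h2' : ‖W q (s+M)‖ ≤ C := hW (s+M) (by omega)
      calc ‖q ^ (s*M + M.choose 2)‖ * ‖W q (s+M)‖ ≤ ‖q‖^M * C :=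
            mul_le_mul h1' h2' (norm_nonneg _) (pow_nonneg (norm_nonneg q) M)
      _ = C * ‖q‖^M := by ring
    · simpa using (tendsto_pow_atTop_nhds_zero_of_lt_one (norm_nonneg q) hq).const_mul C
  have h3 : Filter.Tendsto (fun M => t 0 - t M) atTop (nhds (W q s)) := by
    have := (tendsto_const_nhds (x := t 0) (f := atTop (α := ℕ))).sub htend
    simpa [ht0] using this
  have h4 : Filter.Tendsto (fun M => ∑ m ∈ range M, tG q 0 s m) atTop (nhds (W q s)) := by
    apply h3.congr
    intro M
    exact (h2 M).symm
  exact tendsto_nhds_unique h1 h4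

lemma Gp_rec (hq : ‖q‖ < 1) (n s : ℕ) (hs : 1 ≤ s) :
    Gp q (n+1) s = Gp q n (s+1) + q^s * Gp q (n+1) (s+1) := by
  set u : ℕ → ℂ := fun m => Nat.casesOn m 0 (fun m' => q^s * tG q (n+1) (s+1) m') with hu
  have hterm : ∀ m, tG q (n+1) s m = tG q n (s+1) m + u m := by
    intro m
    cases m with
    | zero =>
      have h0 : u 0 = 0 := rfl
      rw [h0, add_zero, tG, tG, Bn_zero_right hq, Bn_zero_right hq]
      have : s+(n+1)+0+1 = (s+1)+n+0+1 := by ring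
      rw [this]
      norm_num
    | succ m =>
      have hu1 : u (m+1) = q^s * tG q (n+1) (s+1) m := rfl
      rw [hu1, tG, tG, tG, Bn_pascal hq n m]
      have i1 : s+(n+1)+(m+1)+1 = s+n+m+3 := by ring
      have i2 : (s+1)+n+(m+1)+1 = s+n+m+3 := by ring
      have i3 : (s+1)+(n+1)+m+1 = s+n+m+3 := by ring
      rw [i1, i2, i3]
      have e1 : s*(m+1) + (m+1).choose 2 = (s*m + m.choose 2) + (s+m) := exp_tel s m
      have e2 : (s+1)*(m+1) + (m+1).choose 2 = ((s*m + m.choose 2) + (s+m)) + (m+1) := by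
        rw [choose2_succ]; ring
      have e3 : (s+1)*m + m.choose 2 = (s*m + m.choose 2) + m := by ring
      rw [e1, e2, e3]
      simp only [pow_add]
      ring
  have hsum1 : Summable (tG q n (s+1)) := summable_tG hq n (s+1) (by omega)
  have hsum2 : Summable (tG q (n+1) (s+1)) := summable_tG hq (n+1) (s+1) (by omega)
  have hsumu : Summable u := by
    apply (summable_nat_add_iff 1).mp
    exact (hsum2.mul_left (q^s)).congr (fun m => rfl)
  calc Gp q (n+1) s = ∑' m, (tG q n (s+1) m + u m) := tsum_congr hterm
  _ = Gp q n (s+1) + ∑' m, u m := Summable.tsum_add hsum1 hsumu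
  _ = Gp q n (s+1) + (u 0 + ∑' m, u (m+1)) := by rw [Summable.tsum_eq_zero_add hsumu]
  _ = Gp q n (s+1) + q^s * Gp q (n+1) (s+1) := by
      have h0 : u 0 = 0 := rfl
      have h1 : ∑' m : ℕ, u (m+1) = q^s * Gp q (n+1) (s+1) := by
        rw [Gp, ← tsum_mul_left]
      rw [h0, zero_add, h1]

lemma Gp_eq_W (hq : ‖q‖ < 1) : ∀ n s : ℕ, 1 ≤ s → Gp q n s = W q s := by
  intro n
  induction n with
  | zero => exact Gp_zero_eq hq
  | succ n ih =>
    obtain ⟨C, hC, hW, _, hGp⟩ := exists_master hq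
    set M2 : ℝ := C/(1-‖q‖) + C with hM2
    have hM2nn : 0 ≤ M2 := by
      have : 0 ≤ C/(1-‖q‖) := div_nonneg hC.le (by linarith)
      rw [hM2]; linarith
    have hD : ∀ s, 1 ≤ s →
        Gp q (n+1) s - W q s = q^s * (Gp q (n+1) (s+1) - W q (s+1)) := by
      intro s hs
      rw [Gp_rec hq n s hs, ih (s+1) (by omega), W_succ hq s hs]
      ring
    have hbound : ∀ s, 1 ≤ s → ‖Gp q (n+1) s - W q s‖ ≤ M2 := by
      intro s hs
      calc ‖Gp q (n+1) s - W q s‖ ≤ ‖Gp q (n+1) s‖ + ‖W q s‖ := norm_sub_le _ _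
      _ ≤ C/(1-‖q‖) + C := add_le_add (hGp (n+1) s hs) (hW s hs)
    have hiter : ∀ N : ℕ, ∀ s, 1 ≤ s → ‖Gp q (n+1) s - W q s‖ ≤ ‖q‖^N * M2 := by
      intro N
      induction N with
      | zero => intro s hs; simpa using hbound s hs
      | succ N ihN =>
        intro s hs
        rw [hD s hs, norm_mul, norm_pow]
        have h1 : ‖Gp q (n+1) (s+1) - W q (s+1)‖ ≤ ‖q‖^N * M2 := ihN (s+1) (by omega)
        have h2 : ‖q‖^s ≤ ‖q‖ := by simpa using pow_norm_le hq hs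
        have h3 : (0:ℝ) ≤ ‖q‖^N * M2 := by positivity
        calc ‖q‖^s * ‖Gp q (n+1) (s+1) - W q (s+1)‖ ≤ ‖q‖ * (‖q‖^N * M2) := by
              apply mul_le_mul h2 h1 (norm_nonneg _) (norm_nonneg q)
        _ = ‖q‖^(N+1) * M2 := by ring
    intro s hs
    have h0 : ‖Gp q (n+1) s - W q s‖ ≤ 0 := by
      have htends : Filter.Tendsto (fun N => ‖q‖^N * M2) atTop (nhds 0) := by
        simpa using (tendsto_pow_atTop_nhds_zero_of_lt_one (norm_nonneg q) hq).mul_const M2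
      exact ge_of_tendsto htends (Filter.Eventually.of_forall fun N => hiter N s hs)
    have := le_antisymm h0 (norm_nonneg _)
    rw [norm_eq_zero, sub_eq_zero] at this
    exact this


lemma cast_choose2 (n : ℕ) : ((n.choose 2 : ℕ) : ℚ) = (n:ℚ) * ((n:ℚ) - 1) / 2 := by
  rw [Nat.cast_choose_two]

lemma T2_add (j m : ℕ) : (j+m+1).choose 2 = (j+1).choose 2 + (m+1).choose 2 + j*m := by
  have h : (((j+m+1).choose 2 : ℕ) : ℚ)
      = (((j+1).choose 2 + (m+1).choose 2 + j*m : ℕ) : ℚ) := by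
    push_cast [cast_choose2]
    ring
  exact_mod_cast h

lemma exp_main (k m : ℕ) : (3*(k+1)+m).choose 2
    = 3*((k+1).choose 2) + (k*m + (3*(k+1)^2 + ((2*(k+1)+1)*m + m.choose 2))) := by
  have h : (((3*(k+1)+m).choose 2 : ℕ) : ℚ)
      = ((3*((k+1).choose 2) + (k*m + (3*(k+1)^2 + ((2*(k+1)+1)*m + m.choose 2))) : ℕ) : ℚ) := by
    push_cast [cast_choose2]
    ring
  exact_mod_cast h

lemma qPoch_inv (hq0 : q ≠ 0) (hq : ‖q‖ < 1) (n : ℕ) :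
    qPoch q⁻¹ q⁻¹ n = (-1)^n * (q^((n+1).choose 2))⁻¹ * Qp q n := by
  induction n with
  | zero => simp [qPoch, Qp_zero]
  | succ n ih =>
    have h1 : qPoch q⁻¹ q⁻¹ (n+1) = qPoch q⁻¹ q⁻¹ n * (1 - q⁻¹ * (q⁻¹)^n) :=
      Finset.prod_range_succ _ _
    have h2 : (1:ℂ) - q⁻¹ * (q⁻¹)^n = -(q^(n+1))⁻¹ * (1 - q^(n+1)) := by
      have hpow : (q^(n+1)) ≠ 0 := pow_ne_zero _ hq0
      rw [← pow_succ', inv_pow, neg_mul, mul_sub, mul_one, inv_mul_cancel₀ hpow]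
      ring
    rw [h1, ih, h2, Qp_succ, choose2_succ (n+1), pow_add]
    have hpow : (q^(n+1)) ≠ 0 := pow_ne_zero _ hq0
    have hT : (q^((n+1).choose 2)) ≠ 0 := pow_ne_zero _ hq0
    field_simp
    ring

lemma qBinom_inv (hq0 : q ≠ 0) (hq : ‖q‖ < 1) (j m : ℕ) :
    qBinom q⁻¹ (j+m) j = (q^(j*m))⁻¹ * Bn q j m := by
  rw [qBinom, Nat.add_sub_cancel_left, qPoch_inv hq0 hq, qPoch_inv hq0 hq,
    qPoch_inv hq0 hq, Bn, T2_add j m]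
  have e1 : Qp q j ≠ 0 := Qp_ne_zero hq j
  have e2 : Qp q m ≠ 0 := Qp_ne_zero hq m
  have e3 : (q : ℂ) ≠ 0 := hq0
  simp only [pow_add]
  have p1 : (q^((j+1).choose 2)) ≠ 0 := pow_ne_zero _ hq0
  have p2 : (q^((m+1).choose 2)) ≠ 0 := pow_ne_zero _ hq0
  have p3 : (q^(j*m)) ≠ 0 := pow_ne_zero _ hq0
  have m1 : ((-1:ℂ))^j ≠ 0 := pow_ne_zero _ (by norm_num)
  have m2 : ((-1:ℂ))^m ≠ 0 := pow_ne_zero _ (by norm_num)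
  field_simp

lemma qPochInf_neg_pow (R : ℕ) : qPochInf (-(q^R)) q = W q R := by
  rw [qPochInf, W]
  exact tprod_congr fun j => by rw [pow_add]; ring

lemma qPochInf_neg : qPochInf (-q) q = W q 1 := by
  have := qPochInf_neg_pow (q := q) 1
  rwa [pow_one] at this

lemma qPoch_neg_eq (r : ℕ) : qPoch (-q) q r = ∏ j ∈ range r, (1 + q^(j+1)) := by
  rw [qPoch]
  exact Finset.prod_congr rfl fun j _ => by rw [pow_succ']; ring

lemma qPoch_neg_ne (hq : ‖q‖ < 1) (r : ℕ) : qPoch (-q) q r ≠ 0 := by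
  rw [qPoch_neg_eq]
  exact Finset.prod_ne_zero_iff.mpr fun j _ => one_add_pow_ne hq (by omega)

lemma qPoch_sq_eq (k : ℕ) : qPoch (q^2) (q^2) k = ∏ j ∈ range k, (1 - q^(2*j+2)) := by
  rw [qPoch]
  refine Finset.prod_congr rfl fun j _ => ?_
  rw [← pow_mul]
  ring_nf

lemma qPoch_sq_ne (hq : ‖q‖ < 1) (k : ℕ) : qPoch (q^2) (q^2) k ≠ 0 := by
  rw [qPoch_sq_eq]
  exact Finset.prod_ne_zero_iff.mpr fun j _ => one_sub_pow_ne hq (by omega)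

lemma W_one_factor (hq : ‖q‖ < 1) (r : ℕ) :
    W q 1 = qPoch (-q) q r * W q (r+1) := by
  rw [qPoch_neg_eq]
  exact W_factor hq r

/-- The inner sum evaluation. -/
lemma inner_eq (hq0 : q ≠ 0) (hq : ‖q‖ < 1) (k : ℕ) :
    (∑' m : ℕ, q ^ (Nat.choose (3 * (k + 1) + m) 2 - 3 * Nat.choose (k + 1) 2) *
      qBinom q⁻¹ (m + (k + 1) - 1) ((k + 1) - 1) *
      qPochInf (-(q ^ (3 * (k + 1) + m + 1))) q / qPoch (q ^ 2) (q ^ 2) (k + 1))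
    = W q 1 * q^(3*(k+1)^2) /
        (qPoch (q^2) (q^2) (k+1) * qPoch (-q) q (2*(k+1))) := by
  have hQe : qPoch (q^2) (q^2) (k+1) ≠ 0 := qPoch_sq_ne hq (k+1)
  have hterm : ∀ m : ℕ,
      q ^ (Nat.choose (3 * (k + 1) + m) 2 - 3 * Nat.choose (k + 1) 2) *
        qBinom q⁻¹ (m + (k + 1) - 1) ((k + 1) - 1) *
        qPochInf (-(q ^ (3 * (k + 1) + m + 1))) q / qPoch (q ^ 2) (q ^ 2) (k + 1)
      = (q^(3*(k+1)^2) / qPoch (q^2) (q^2) (k+1)) * tG q k (2*k+3) m := by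
    intro m
    have hsub : Nat.choose (3 * (k + 1) + m) 2 - 3 * Nat.choose (k + 1) 2
        = k*m + (3*(k+1)^2 + ((2*(k+1)+1)*m + m.choose 2)) := by
      have := exp_main k m
      omega
    have hb : m + (k + 1) - 1 = k + m := by omega
    have hb2 : (k + 1) - 1 = k := by omega
    rw [hsub, hb, hb2, qBinom_inv hq0 hq k m, qPochInf_neg_pow]
    rw [tG]
    have hidx : 3*(k+1)+m+1 = (2*k+3)+k+m+1 := by ring
    rw [hidx]
    have hexp : (2*(k+1)+1)*m + m.choose 2 = (2*k+3)*m + m.choose 2 := by ring_nf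
    rw [hexp]
    have hp : (q^(k*m)) ≠ 0 := pow_ne_zero _ hq0
    simp only [pow_add]
    field_simp
  rw [tsum_congr hterm, tsum_mul_left]
  have hGp : (∑' x : ℕ, tG q k (2*k+3) x) = W q (2*k+3) :=
    Gp_eq_W hq k (2*k+3) (by omega)
  rw [hGp]
  have hW1 : W q 1 = qPoch (-q) q (2*(k+1)) * W q (2*k+3) := by
    have := W_one_factor (q := q) hq (2*(k+1))
    rwa [show 2*(k+1)+1 = 2*k+3 by ring] at this
  rw [hW1]
  have hQm : qPoch (-q) q (2*(k+1)) ≠ 0 := qPoch_neg_ne hq _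
  field_simp


end NoRaftAux

open NoRaftAux

/-- The inclusion-exclusion series equals Slater's series No. 19. -/
theorem no_raft_series_eq_slater_series (q : ℂ) (hq0 : q ≠ 0)
    (hq : ‖q‖ < 1) :
    qPochInf (-q) q +
      ∑' k : ℕ, (-1 : ℂ) ^ (k + 1) *
        ∑' m : ℕ, q ^ (Nat.choose (3 * (k + 1) + m) 2 - 3 * Nat.choose (k + 1) 2) *
          qBinom q⁻¹ (m + (k + 1) - 1) ((k + 1) - 1) *
          qPochInf (-(q ^ (3 * (k + 1) + m + 1))) q / qPoch (q ^ 2) (q ^ 2) (k + 1) =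
    qPochInf (-q) q *
      ∑' k : ℕ, ((-1 : ℂ) ^ k * q ^ (3 * k ^ 2) /
        (qPoch (q ^ 2) (q ^ 2) k * qPoch (-q) q (2 * k))) := by
  have hqn : ‖q‖ < 1 := hq
  set g : ℕ → ℂ := fun K => (-1:ℂ)^K * q^(3*K^2) /
    (qPoch (q^2) (q^2) K * qPoch (-q) q (2*K)) with hg
  have hsumg : Summable g := by
    obtain ⟨c, hc, hlow⟩ := exists_lower hqn
    apply Summable.of_norm_bounded (g := fun K => (1/(c*c)) * ‖q‖^K)
      ((summable_geometric_of_lt_one (norm_nonneg q) hqn).mul_left _)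
    intro K
    have h1 : c ≤ ‖qPoch (q^2) (q^2) K‖ := by
      have := hlow K (fun j => -(q^(2*j+2)))
        (fun j => by rw [norm_neg]; exact norm_q_pow_le hqn (by omega))
      rw [qPoch_sq_eq]
      simpa [sub_eq_add_neg] using this
    have h2 : c ≤ ‖qPoch (-q) q (2*K)‖ := by
      have := hlow (2*K) (fun j => q^(j+1)) (fun j => norm_q_pow_le hqn le_rfl)
      rw [qPoch_neg_eq]
      exact this
    have hnum : ‖(-1:ℂ)^K * q^(3*K^2)‖ ≤ ‖q‖^K := by
      rw [norm_mul, norm_pow, norm_neg, norm_one, one_pow, one_mul]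
      apply norm_q_pow_le hqn
      rcases Nat.eq_zero_or_pos K with h | h
      · simp [h]
      · calc K ≤ 3*K*K := Nat.le_mul_of_pos_left K (by omega)
        _ = 3*K^2 := by ring
    rw [hg]
    simp only []
    rw [norm_div, norm_mul, norm_mul]
    rw [← norm_mul]
    have hd : c*c ≤ ‖qPoch (q^2) (q^2) K‖ * ‖qPoch (-q) q (2*K)‖ :=
      mul_le_mul h1 h2 hc.le (hc.le.trans h1)
    calc ‖(-1:ℂ)^K * q^(3*K^2)‖ / (‖qPoch (q^2) (q^2) K‖ * ‖qPoch (-q) q (2*K)‖)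
        ≤ ‖q‖^K / (c*c) :=
          div_le_div₀ (pow_nonneg (norm_nonneg q) K) hnum (by positivity) hd
    _ = (1/(c*c)) * ‖q‖^K := by ring
  have hg0 : g 0 = 1 := by
    rw [hg]
    simp [qPoch]
  have hinner : ∀ k : ℕ, (-1:ℂ)^(k+1) *
      (∑' m : ℕ, q ^ (Nat.choose (3 * (k + 1) + m) 2 - 3 * Nat.choose (k + 1) 2) *
        qBinom q⁻¹ (m + (k + 1) - 1) ((k + 1) - 1) *
        qPochInf (-(q ^ (3 * (k + 1) + m + 1))) q / qPoch (q ^ 2) (q ^ 2) (k + 1))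
      = W q 1 * g (k+1) := by
    intro k
    rw [inner_eq hq0 hqn k, hg]
    ring
  have hW1 : qPochInf (-q) q = W q 1 := qPochInf_neg
  calc qPochInf (-q) q +
      ∑' k : ℕ, (-1 : ℂ) ^ (k + 1) *
        ∑' m : ℕ, q ^ (Nat.choose (3 * (k + 1) + m) 2 - 3 * Nat.choose (k + 1) 2) *
          qBinom q⁻¹ (m + (k + 1) - 1) ((k + 1) - 1) *
          qPochInf (-(q ^ (3 * (k + 1) + m + 1))) q / qPoch (q ^ 2) (q ^ 2) (k + 1)
      = W q 1 + ∑' k : ℕ, W q 1 * g (k+1) := by rw [hW1, tsum_congr hinner]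
  _ = W q 1 + W q 1 * ∑' k : ℕ, g (k+1) := by rw [tsum_mul_left]
  _ = W q 1 * (g 0 + ∑' k : ℕ, g (k+1)) := by rw [hg0]; ring
  _ = W q 1 * ∑' K : ℕ, g K := by rw [← Summable.tsum_eq_zero_add hsumg]
  _ = qPochInf (-q) q * ∑' k : ℕ, ((-1 : ℂ) ^ k * q ^ (3 * k ^ 2) /
        (qPoch (q ^ 2) (q ^ 2) k * qPoch (-q) q (2 * k))) := by rw [hW1, hg]
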